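/- Let F : Ω → U be a continuous frame with frame operator S and bounds A₀, B. Then ω ↦ S⁻¹(F(ω)) is a continuous frame for U with bounds B⁻¹ and A₀⁻¹, and its frame operator is S⁻¹. -/

import Mathlib

open MeasureTheory CStarModule
open scoped RightActions

/-- Hilbert C⋆-module with a *right* `A`-action, as `CStarModule` was defined in Mathlib
of December 2024 (Mathlib's `CStarModule` now uses a left action `SMul A E`). -/
class RightCStarModule (A : outParam <| Type*) (E : Type*) [NonUnitalSemiring A] [StarRing A]
    [Module ℂ A] [AddCommGroup E] [Module ℂ E] [PartialOrder A] [SMul Aᵐᵒᵖ E] [Norm A] [Norm E]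
    extends Inner A E where
  inner_add_right {x} {y} {z} : inner x (y + z) = inner x y + inner x z
  inner_self_nonneg {x} : 0 ≤ inner x x
  inner_self {x} : inner x x = 0 ↔ x = 0
  inner_op_smul_right {a : A} {x y : E} : inner x (y <• a) = inner x y * a
  inner_smul_right_complex {z : ℂ} {x} {y} : inner x (z • y) = z • inner x y
  star_inner x y : star (inner x y) = inner y x
  norm_eq_sqrt_norm_inner_self x : ‖x‖ = Real.sqrt ‖inner x x‖

variable {A : Type*} [CStarAlgebra A] [PartialOrder A] [StarOrderedRing A]
variable {U : Type*} [NormedAddCommGroup U] [NormedSpace ℂ U] [CompleteSpace U]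
  [SMul Aᵐᵒᵖ U] [RightCStarModule A U]
variable {Ω : Type*} [MeasurableSpace Ω]

local notation "⟪" x ", " y "⟫" => (inner A x y : A)

/-- `F : Ω → U` is a continuous frame for the Hilbert C*-module `U` with bounds `A₀`, `B`. -/
def IsContinuousFrame (μ : Measure Ω) (F : Ω → U) (A₀ B : ℝ) : Prop :=
  0 < A₀ ∧ 0 < B ∧
  (∀ f : U, StronglyMeasurable fun ω => (inner A f (F ω) : A)) ∧
  (∀ f : U, Integrable (fun ω => (inner A f (F ω) : A) * inner A (F ω) f) μ) ∧
  ∀ f : U, A₀ • (inner A f f : A) ≤ (∫ ω, (inner A f (F ω) : A) * inner A (F ω) f ∂μ) ∧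
    (∫ ω, (inner A f (F ω) : A) * inner A (F ω) f ∂μ) ≤ B • (inner A f f : A)

/-- `F : Ω → U` is a continuous Bessel mapping with bound `B`. -/
def IsBessel (μ : Measure Ω) (F : Ω → U) (B : ℝ) : Prop :=
  0 < B ∧
  (∀ f : U, StronglyMeasurable fun ω => (inner A f (F ω) : A)) ∧
  (∀ f : U, Integrable (fun ω => (inner A f (F ω) : A) * inner A (F ω) f) μ) ∧
  ∀ f : U, (∫ ω, (inner A f (F ω) : A) * inner A (F ω) f ∂μ) ≤ B • (inner A f f : A)

/-- `φ : Ω → A` belongs to the Hilbert `A`-module `L²(Ω, A)`. -/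
def MemL2 (μ : Measure Ω) (φ : Ω → A) : Prop :=
  AEStronglyMeasurable φ μ ∧ Integrable (fun ω => star (φ ω) * φ ω) μ

/-- `G` is a dual of the continuous Bessel mapping `F` (weak reconstruction formula). -/
def IsDual (μ : Measure Ω) (F G : Ω → U) : Prop :=
  (∃ B : ℝ, IsBessel μ G B) ∧
  ∀ f g : U, (inner A f g : A) = ∫ ω, (inner A f (G ω) : A) * inner A (F ω) g ∂μ

/-- `star` on a C*-algebra as a real-linear isometry. -/
noncomputable def starLIa (A : Type*) [CStarAlgebra A] : A →ₗᵢ[ℝ] A where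
  toFun := star
  map_add' := star_add
  map_smul' r a := by simp
  norm_map' := norm_star

lemma smul_nonneg_aux {A : Type*} [CStarAlgebra A] [PartialOrder A] [StarOrderedRing A]
    {c : ℝ} (hc : 0 ≤ c) {a : A} (ha : 0 ≤ a) : 0 ≤ c • a := by
  have h1 : c • a = star ((Real.sqrt c : ℝ) • (1 : A)) * a * ((Real.sqrt c : ℝ) • (1 : A)) := by
    rw [star_smul, star_one, star_trivial, smul_mul_assoc, one_mul, mul_smul_comm, mul_one,
      smul_smul, Real.mul_self_sqrt hc]
  rw [h1]
  exact star_left_conjugate_nonneg ha _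

lemma smul_le_smul_aux {A : Type*} [CStarAlgebra A] [PartialOrder A] [StarOrderedRing A]
    {c : ℝ} (hc : 0 ≤ c) {a b : A} (h : a ≤ b) : c • a ≤ c • b := by
  rw [← sub_nonneg, ← smul_sub]
  exact smul_nonneg_aux hc (sub_nonneg.2 h)

lemma rcm_inner_sub_right (x y z : U) : ⟪x, y - z⟫ = ⟪x, y⟫ - ⟪x, z⟫ :=
  (AddMonoidHom.mk' (fun y => ⟪x, y⟫) (fun _ _ => RightCStarModule.inner_add_right)).map_sub y z

lemma rcm_inner_sub_left (x y z : U) : ⟪x - y, z⟫ = ⟪x, z⟫ - ⟪y, z⟫ := by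
  rw [← RightCStarModule.star_inner z (x - y), rcm_inner_sub_right, star_sub,
    RightCStarModule.star_inner, RightCStarModule.star_inner]

lemma rcm_inner_smul_right_real (r : ℝ) (x y : U) : ⟪x, r • y⟫ = r • ⟪x, y⟫ := by
  rw [← Complex.coe_smul, RightCStarModule.inner_smul_right_complex, Complex.coe_smul]

lemma rcm_inner_smul_left_real (r : ℝ) (x y : U) : ⟪r • x, y⟫ = r • ⟪x, y⟫ := by
  rw [← RightCStarModule.star_inner y, rcm_inner_smul_right_real, star_smul, star_trivial,
    RightCStarModule.star_inner]

/-- If `F` is a continuous frame with bounds `A₀, B` and frame operator `S`, then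
`ω ↦ S⁻¹(F(ω))` is a continuous frame with bounds `B⁻¹, A₀⁻¹` whose frame operator is
`S⁻¹` (stated weakly). -/
theorem canonical_dual_frame (μ : Measure Ω) (F : Ω → U) (A₀ B : ℝ)
    (hF : IsContinuousFrame μ F A₀ B) (S Sinv : U → U)
    (hS : ∀ f g : U, ⟪g, S f⟫ = ∫ ω, ⟪g, F ω⟫ * ⟪F ω, f⟫ ∂μ)
    (hSl : ∀ f : U, Sinv (S f) = f) (hSr : ∀ f : U, S (Sinv f) = f) :
    IsContinuousFrame μ (fun ω => Sinv (F ω)) B⁻¹ A₀⁻¹ ∧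
    ∀ f g : U, ⟪g, Sinv f⟫ = ∫ ω, ⟪g, Sinv (F ω)⟫ * ⟪Sinv (F ω), f⟫ ∂μ := by
  obtain ⟨hA₀, hB, hmeas, hint, hbounds⟩ := hF
  have star_int : ∀ φ : Ω → A, ∫ ω, star (φ ω) ∂μ = star (∫ ω, φ ω ∂μ) := fun φ =>
    (starLIa A).integral_comp_comm φ
  -- weak self-adjointness of S
  have star_s : ∀ x y : U, star ⟪x, S y⟫ = ⟪y, S x⟫ := by
    intro x y
    have h1 : (fun ω => ⟪y, F ω⟫ * ⟪F ω, x⟫) = fun ω => star (⟪x, F ω⟫ * ⟪F ω, y⟫) :=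
      funext fun ω => by rw [star_mul, RightCStarModule.star_inner, RightCStarModule.star_inner]
    rw [hS y x, hS x y, h1, star_int]
  -- Sinv is self-adjoint
  have sinv_adj : ∀ x y : U, ⟪x, Sinv y⟫ = ⟪Sinv x, y⟫ := by
    intro x y
    calc ⟪x, Sinv y⟫ = ⟪S (Sinv x), Sinv y⟫ := by rw [hSr]
      _ = star ⟪Sinv y, S (Sinv x)⟫ := (RightCStarModule.star_inner _ _).symm
      _ = ⟪Sinv x, S (Sinv y)⟫ := star_s _ _
      _ = ⟪Sinv x, y⟫ := by rw [hSr]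
  have sinv_adj' : ∀ x y : U, ⟪Sinv y, x⟫ = ⟪y, Sinv x⟫ := by
    intro x y
    rw [← RightCStarModule.star_inner, sinv_adj, RightCStarModule.star_inner]
  -- frame-type bounds for S, rephrased
  have lb : ∀ h : U, A₀ • ⟪h, h⟫ ≤ ⟪h, S h⟫ := by
    intro h; rw [hS]; exact (hbounds h).1
  have ub : ∀ h : U, ⟪h, S h⟫ ≤ B • ⟪h, h⟫ := by
    intro h; rw [hS]; exact (hbounds h).2
  -- self-adjointness facts
  have sa1 : ∀ g : U, star ⟪g, S g⟫ = ⟪g, S g⟫ := fun g => star_s g g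
  have hsa : ∀ g : U, ⟪S g, g⟫ = ⟪g, S g⟫ := by
    intro g; rw [← RightCStarModule.star_inner, sa1]
  -- key inequality 1 : A₀ • ⟪g, S g⟫ ≤ ⟪S g, S g⟫
  have upper : ∀ g : U, A₀ • ⟪g, S g⟫ ≤ ⟪S g, S g⟫ := by
    intro g
    have hk : (0 : A) ≤ ⟪S g - A₀ • g, S g - A₀ • g⟫ := RightCStarModule.inner_self_nonneg
    have hlb : (0 : A) ≤ ⟪g, S g⟫ - A₀ • ⟪g, g⟫ := sub_nonneg.2 (lb g)
    have expand : ⟪S g - A₀ • g, S g - A₀ • g⟫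
        = ⟪S g, S g⟫ - (2 * A₀) • ⟪g, S g⟫ + (A₀ * A₀) • ⟪g, g⟫ := by
      simp only [rcm_inner_sub_left, rcm_inner_sub_right, rcm_inner_smul_left_real, rcm_inner_smul_right_real,
        hsa g, smul_sub]
      module
    have key : ⟪S g, S g⟫ - A₀ • ⟪g, S g⟫
        = ⟪S g - A₀ • g, S g - A₀ • g⟫ + A₀ • (⟪g, S g⟫ - A₀ • ⟪g, g⟫) := by
      rw [expand]; module
    have h0 : (0 : A) ≤ ⟪S g, S g⟫ - A₀ • ⟪g, S g⟫ :=
      key ▸ add_nonneg hk (smul_nonneg_aux hA₀.le hlb)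
    exact sub_nonneg.1 h0
  -- key inequality 2 : ⟪S g, S g⟫ ≤ B • ⟪g, S g⟫
  have lower : ∀ g : U, ⟪S g, S g⟫ ≤ B • ⟪g, S g⟫ := by
    intro g
    set m : U := B • g - S g with hm_def
    have hm : (0 : A) ≤ ⟪m, S m⟫ :=
      le_trans (smul_nonneg_aux hA₀.le RightCStarModule.inner_self_nonneg) (lb m)
    have ht : (0 : A) ≤ B • ⟪S g, S g⟫ - ⟪S g, S (S g)⟫ := sub_nonneg.2 (ub (S g))
    have h1 : ⟪m, S g⟫ = B • ⟪g, S g⟫ - ⟪S g, S g⟫ := by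
      rw [hm_def, rcm_inner_sub_left, rcm_inner_smul_left_real]
    have hgSSg : ⟪g, S (S g)⟫ = ⟪S g, S g⟫ := by
      rw [← star_s (S g) g, RightCStarModule.star_inner]
    have h2 : ⟪m, S (S g)⟫ = B • ⟪S g, S g⟫ - ⟪S g, S (S g)⟫ := by
      rw [hm_def, rcm_inner_sub_left, rcm_inner_smul_left_real, hgSSg]
    have sa2 : ∀ x : U, star ⟪x, x⟫ = ⟪x, x⟫ := fun x => RightCStarModule.star_inner x x
    have h3 : ⟪g, S m⟫ = B • ⟪g, S g⟫ - ⟪S g, S g⟫ := by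
      rw [← star_s m g, h1, star_sub, star_smul, star_trivial, sa1, sa2]
    have h4 : ⟪S g, S m⟫ = B • ⟪S g, S g⟫ - ⟪S g, S (S g)⟫ := by
      rw [← star_s m (S g), h2, star_sub, star_smul, star_trivial, sa2, star_s]
    have hmm : ⟪m, S m⟫ = B • ⟪g, S m⟫ - ⟪S g, S m⟫ := by
      rw [hm_def, rcm_inner_sub_left, rcm_inner_smul_left_real]
    have key : B • (B • ⟪g, S g⟫ - ⟪S g, S g⟫)
        = ⟪m, S m⟫ + (B • ⟪S g, S g⟫ - ⟪S g, S (S g)⟫) := by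
      rw [hmm, h3, h4]; module
    have h0 : (0 : A) ≤ B • (B • ⟪g, S g⟫ - ⟪S g, S g⟫) := key ▸ add_nonneg hm ht
    have h5 : (0 : A) ≤ B • ⟪g, S g⟫ - ⟪S g, S g⟫ := by
      have := smul_nonneg_aux (inv_nonneg.2 hB.le) h0
      rwa [smul_smul, inv_mul_cancel₀ hB.ne', one_smul] at this
    exact sub_nonneg.1 h5
  -- the dual integrand equals the original integrand at `Sinv f`
  have integrand_eq : ∀ (f : U) (ω : Ω),
      ⟪f, Sinv (F ω)⟫ * ⟪Sinv (F ω), f⟫ = ⟪Sinv f, F ω⟫ * ⟪F ω, Sinv f⟫ := by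
    intro f ω
    rw [sinv_adj f (F ω), sinv_adj' f (F ω)]
  have dual_int : ∀ f : U,
      (∫ ω, ⟪f, Sinv (F ω)⟫ * ⟪Sinv (F ω), f⟫ ∂μ) = ⟪Sinv f, S (Sinv f)⟫ := by
    intro f
    simp only [integrand_eq f]
    exact (hS (Sinv f) (Sinv f)).symm
  constructor
  · refine ⟨inv_pos.2 hB, inv_pos.2 hA₀, ?_, ?_, ?_⟩
    · intro f
      have : (fun ω => ⟪f, Sinv (F ω)⟫) = fun ω => ⟪Sinv f, F ω⟫ :=
        funext fun ω => sinv_adj f (F ω)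
      rw [this]; exact hmeas (Sinv f)
    · intro f
      have : (fun ω => ⟪f, Sinv (F ω)⟫ * ⟪Sinv (F ω), f⟫)
          = fun ω => ⟪Sinv f, F ω⟫ * ⟪F ω, Sinv f⟫ := funext (integrand_eq f)
      rw [this]; exact hint (Sinv f)
    · intro f
      rw [dual_int f]
      have hf : ⟪f, f⟫ = ⟪S (Sinv f), S (Sinv f)⟫ := by rw [hSr]
      constructor
      · rw [hf]
        have := smul_le_smul_aux (inv_nonneg.2 hB.le) (lower (Sinv f))
        rwa [smul_smul, inv_mul_cancel₀ hB.ne', one_smul] at this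
      · rw [hf]
        have := smul_le_smul_aux (inv_nonneg.2 hA₀.le) (upper (Sinv f))
        rwa [smul_smul, inv_mul_cancel₀ hA₀.ne', one_smul] at this
  · intro f g
    have step : (fun ω => ⟪g, Sinv (F ω)⟫ * ⟪Sinv (F ω), f⟫)
        = fun ω => ⟪Sinv g, F ω⟫ * ⟪F ω, Sinv f⟫ :=
      funext fun ω => by rw [sinv_adj g (F ω), sinv_adj' f (F ω)]
    calc ⟪g, Sinv f⟫ = ⟪Sinv g, f⟫ := sinv_adj g f
      _ = ⟪Sinv g, S (Sinv f)⟫ := by rw [hSr]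
      _ = ∫ ω, ⟪Sinv g, F ω⟫ * ⟪F ω, Sinv f⟫ ∂μ := hS (Sinv f) (Sinv g)
      _ = ∫ ω, ⟪g, Sinv (F ω)⟫ * ⟪Sinv (F ω), f⟫ ∂μ := by rw [step]
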